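/- Let k be a field, q ∈ k^×, and let A be an associative k-algebra containing elements x_1, x_2, x_3 satisfying x_1·x_3 = q·x_3·x_1, x_2·x_21 − x_21·x_2 − x_1·x_21 = 0 where x_21 := x_2·x_1 + x_1·x_2, and x_21·x_3 = q^2·x_3·x_21. Define recursively z_0 := x_3 and z_{n+1} := x_2·z_n − (−1)^n·q·z_n·x_2. Then for every natural number n, x_1·z_n = (−1)^n·q·z_n·x_1 and x_21·z_n = q^2·z_n·x_21. -/

import Mathlib

theorem stmt_9 (k : Type*) [Field k] (q : k) (hq : q ≠ 0)
    (A : Type*) [Ring A] [Algebra k A] (x1 x2 x3 : A)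
    (h13 : x1 * x3 = q • (x3 * x1))
    (h21 : x2 * (x2 * x1 + x1 * x2) - (x2 * x1 + x1 * x2) * x2
        - x1 * (x2 * x1 + x1 * x2) = 0)
    (h213 : (x2 * x1 + x1 * x2) * x3 = (q ^ 2) • (x3 * (x2 * x1 + x1 * x2)))
    (z : ℕ → A) (hz0 : z 0 = x3)
    (hz : ∀ n : ℕ, z (n + 1) = x2 * z n - ((-1 : k) ^ n * q) • (z n * x2)) :
    ∀ n : ℕ, x1 * z n = ((-1 : k) ^ n * q) • (z n * x1) ∧
      (x2 * x1 + x1 * x2) * z n = (q ^ 2) • (z n * (x2 * x1 + x1 * x2)) := by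
  set x21 : A := x2 * x1 + x1 * x2 with hx21
  have h21'' : x2 * x21 = x21 * x2 + x1 * x21 := by
    rw [sub_sub, sub_eq_zero] at h21; exact h21
  intro n
  induction n with
  | zero => simpa [hz0] using ⟨h13, h213⟩
  | succ n ih =>
    obtain ⟨h1, h2⟩ := ih
    set c : k := (-1 : k) ^ n * q with hc
    have hc0 : c ≠ 0 := by simp [hc, hq, pow_ne_zero]
    have h2n : ((-1 : k)) ^ (n * 2) = 1 := by rw [pow_mul']; norm_num
    have hcoef : ((-1 : k) ^ (n + 1) * q) = -c := by rw [hc]; ring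
    have h1l : ∀ y : A, x1 * (z n * y) = c • (z n * (x1 * y)) := fun y => by
      rw [← mul_assoc, h1, smul_mul_assoc, mul_assoc]
    have h1inv : z n * x1 = c⁻¹ • (x1 * z n) := by
      rw [h1, smul_smul, inv_mul_cancel₀ hc0, one_smul]
    have h2l : ∀ y : A, x21 * (z n * y) = (q ^ 2) • (z n * (x21 * y)) := fun y => by
      rw [← mul_assoc, h2, smul_mul_assoc, mul_assoc]
    have h2d : x1 * (x2 * z n)
        = (q ^ 2) • (z n * (x2 * x1)) + (q ^ 2) • (z n * (x1 * x2)) - x2 * (x1 * z n) := by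
      have h := h2
      rw [hx21, add_mul, mul_add, smul_add, mul_assoc, mul_assoc] at h
      linear_combination (norm := abel) h
    refine ⟨?_, ?_⟩
    · rw [hz n, hcoef]
      simp only [mul_sub, sub_mul, mul_add, add_mul, smul_sub, smul_add, smul_smul,
        mul_smul_comm, smul_mul_assoc, mul_assoc, h1l, h1inv, h2l]
      rw [h2d]
      match_scalars
      all_goals field_simp [hc0, hc]
      all_goals (rw [hc]; ring_nf; try simp [h2n])
    · rw [hz n]
      have hfix : x21 * x2 = x2 * x21 - x1 * x21 := by rw [h21'']; abel
      have hA : x21 * (x2 * z n) = x2 * (x21 * z n) - x1 * (x21 * z n) := by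
        rw [← mul_assoc, hfix, sub_mul, mul_assoc, mul_assoc]
      simp only [hA, h2, hfix, mul_sub, sub_mul, mul_add, add_mul, smul_sub, smul_add,
        smul_smul, mul_smul_comm, smul_mul_assoc, mul_assoc, h1l, h1inv, h2l]
      match_scalars
      all_goals field_simp [hc0, hc]
      all_goals (rw [hc]; ring_nf; try simp [h2n])
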